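/- arXiv:2204.07949 — 2 statements merged into one kernel-verified Lean document; each statement's English description precedes it below -/
import Mathlib

section
/- Suppose Γ_1 is the constant function 1 on Δ, and let α* minimize E(α) = max_{1≤i≤n} |y_i − Σ_j α_j Γ_j(x_i)| with optimal value d > 0. Then there exist indices i and k such that y_i − Σ_j α*_j Γ_j(x_i) = d (an undershoot) and Σ_j α*_j Γ_j(x_k) − y_k = d (an overshoot). -/
noncomputable def unifErr {n m : ℕ} (hn : 0 < n) {Δ : Type*} (x : Fin n → Δ)
    (Γ : Fin m → Δ → ℝ) (y : Fin n → ℝ) (α : Fin m → ℝ) : ℝ :=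
  Finset.univ.sup' ⟨⟨0, hn⟩, Finset.mem_univ _⟩
    fun i => |y i - ∑ j, α j * Γ j (x i)|

theorem overshoot_undershoot {n m : ℕ} (hn : 0 < n) (hm : 0 < m) {Δ : Type*}
    (x : Fin n → Δ) (Γ : Fin m → Δ → ℝ) (y : Fin n → ℝ)
    (hΓ1 : ∀ s : Δ, Γ ⟨0, hm⟩ s = 1)
    (αstar : Fin m → ℝ) (d : ℝ) (hd : 0 < d)
    (hval : unifErr hn x Γ y αstar = d)
    (hopt : ∀ α : Fin m → ℝ, d ≤ unifErr hn x Γ y α) :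
    (∃ i : Fin n, y i - ∑ j, αstar j * Γ j (x i) = d) ∧
      (∃ k : Fin n, (∑ j, αstar j * Γ j (x k)) - y k = d) := by
  have ne : (Finset.univ : Finset (Fin n)).Nonempty := ⟨⟨0, hn⟩, Finset.mem_univ _⟩
  set i0 : Fin m := ⟨0, hm⟩ with hi0
  set r : Fin n → ℝ := fun i => y i - ∑ j, αstar j * Γ j (x i) with hr
  have habs : ∀ i, |r i| ≤ d := by
    intro i
    rw [← hval]
    unfold unifErr
    exact Finset.le_sup' (fun i => |y i - ∑ j, αstar j * Γ j (x i)|) (Finset.mem_univ i)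
  have key : ∀ c : ℝ, unifErr hn x Γ y (fun j => αstar j + if j = i0 then c else 0)
      = Finset.univ.sup' ne (fun i => |r i - c| : Fin n → ℝ) := by
    intro c
    unfold unifErr
    apply Finset.sup'_congr _ rfl
    intro i _
    have hsum : ∑ j, (αstar j + if j = i0 then c else 0) * Γ j (x i)
        = (∑ j, αstar j * Γ j (x i)) + c := by
      have : ∀ j : Fin m, (αstar j + if j = i0 then c else 0) * Γ j (x i)
          = αstar j * Γ j (x i) + (if j = i0 then c * Γ j (x i) else 0) := by
        intro j; by_cases h : j = i0 <;> simp [h] <;> ring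
      rw [Finset.sum_congr rfl (fun j _ => this j), Finset.sum_add_distrib,
        Finset.sum_ite_eq' Finset.univ i0 (fun j => c * Γ j (x i))]
      simp [hΓ1]
    rw [hsum]
    ring_nf
    rw [show r i = y i - ∑ j, αstar j * Γ j (x i) from rfl]; congr 1; ring
  constructor
  · by_contra h
    push_neg at h
    have hlt : ∀ i, r i < d := fun i =>
      lt_of_le_of_ne (le_trans (le_abs_self _) (habs i)) (h i)
    set M := Finset.univ.sup' ne r with hM
    have hMd : M < d := (Finset.sup'_lt_iff ne).2 fun i _ => hlt i
    set ε := (d - M) / 2 with hε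
    have hεpos : 0 < ε := by rw [hε]; linarith
    have hlt2 : unifErr hn x Γ y (fun j => αstar j + if j = i0 then -ε else 0) < d := by
      rw [key (-ε)]
      apply (Finset.sup'_lt_iff ne).2
      intro i _
      have h1 := (abs_le.1 (habs i)).1
      have h2 : r i ≤ M := Finset.le_sup' r (Finset.mem_univ i)
      have hε2 : ε = (d - M) / 2 := hε
      rw [abs_lt]
      constructor
      · linarith
      · linarith
    exact absurd (hopt _) (not_le.2 hlt2)
  · by_contra h
    push_neg at h
    have hlt : ∀ i, -r i < d := by
      intro i
      have hne : -r i ≠ d := by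
        intro hc
        exact h i (by simp [hr] at hc ⊢; linarith)
      exact lt_of_le_of_ne (le_trans (neg_le_abs _) (habs i)) hne
    set M := Finset.univ.sup' ne (fun i => -r i) with hM
    have hMd : M < d := (Finset.sup'_lt_iff ne).2 fun i _ => hlt i
    set ε := (d - M) / 2 with hε
    have hεpos : 0 < ε := by rw [hε]; linarith
    have hlt2 : unifErr hn x Γ y (fun j => αstar j + if j = i0 then ε else 0) < d := by
      rw [key ε]
      apply (Finset.sup'_lt_iff ne).2
      intro i _
      have h1 := (abs_le.1 (habs i)).2
      have h2 : -r i ≤ M := Finset.le_sup' (fun i => -r i) (Finset.mem_univ i)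
      have hε2 : ε = (d - M) / 2 := hε
      rw [abs_lt]
      constructor
      · linarith
      · linarith
    exact absurd (hopt _) (not_le.2 hlt2)
end

section
/- Strong duality value identity for the discrete Chebyshev problem: min_{α ∈ ℝ^m} max_{1≤i≤n} |y_i − Σ_j α_j Γ_j(x_i)| = max { Σ_i (β_{2i−1} − β_{2i}) y_i : β ∈ ℝ^{2n}, β ≥ 0, Σ_i β_i = 1, Σ_i (β_{2i−1} − β_{2i}) Γ_k(x_i) = 0 for all k }. -/
lemma unifErr_ge {n m : ℕ} (hn : 0 < n) {Δ : Type*} (x : Fin n → Δ)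
    (Γ : Fin m → Δ → ℝ) (y : Fin n → ℝ) (α : Fin m → ℝ) (i : Fin n) :
    |y i - ∑ j, α j * Γ j (x i)| ≤ unifErr hn x Γ y α := by
  unfold unifErr
  exact Finset.le_sup' (fun i => |y i - ∑ j, α j * Γ j (x i)|) (Finset.mem_univ i)

lemma unifErr_nonneg {n m : ℕ} (hn : 0 < n) {Δ : Type*} (x : Fin n → Δ)
    (Γ : Fin m → Δ → ℝ) (y : Fin n → ℝ) (α : Fin m → ℝ) :
    0 ≤ unifErr hn x Γ y α :=
  le_trans (abs_nonneg _) (unifErr_ge hn x Γ y α ⟨0, hn⟩)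

set_option maxHeartbeats 2000000 in
theorem strong_duality {n m : ℕ} (hn : 0 < n) (hm : 0 < m) {Δ : Type*}
    (x : Fin n → Δ) (Γ : Fin m → Δ → ℝ) (y : Fin n → ℝ)
    (hne : ∃ βo βe : Fin n → ℝ, (∀ i, 0 ≤ βo i) ∧ (∀ i, 0 ≤ βe i) ∧
      (∑ i, (βo i + βe i)) = 1 ∧ ∀ k : Fin m, ∑ i, (βo i - βe i) * Γ k (x i) = 0) :
    (⨅ α : Fin m → ℝ, unifErr hn x Γ y α) =
      sSup {v : ℝ | ∃ βo βe : Fin n → ℝ, (∀ i, 0 ≤ βo i) ∧ (∀ i, 0 ≤ βe i) ∧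
        (∑ i, (βo i + βe i)) = 1 ∧
        (∀ k : Fin m, ∑ i, (βo i - βe i) * Γ k (x i) = 0) ∧
        v = ∑ i, (βo i - βe i) * y i} := by
  classical
  set v : Fin n → (Fin m → ℝ) × ℝ := fun i => (fun j => Γ j (x i), y i) with hv
  set g : Fin n × Bool → (Fin m → ℝ) × ℝ := fun p => (cond p.2 (1:ℝ) (-1)) • v p.1 with hg
  set K : Set (Fin n × Bool → ℝ) :=
    {w | (∀ p, 0 ≤ w p) ∧ ∑ p, w p = 1} with hK
  set A : (Fin n × Bool → ℝ) →ₗ[ℝ] ((Fin m → ℝ) × ℝ) :=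
    { toFun := fun w => ∑ p, w p • g p
      map_add' := by
        intro a b; simp [add_smul, Finset.sum_add_distrib]
      map_smul' := by
        intro c a; simp [Finset.smul_sum, smul_smul] } with hA
  set S : Set ((Fin m → ℝ) × ℝ) := A '' K with hS
  -- A applied to weights coming from βo, βe
  have hAval : ∀ βo βe : Fin n → ℝ,
      A (fun p => cond p.2 (βo p.1) (βe p.1)) = ∑ i, (βo i - βe i) • v i := by
    intro βo βe
    show ∑ p : Fin n × Bool, (cond p.2 (βo p.1) (βe p.1)) • g p = _
    rw [Fintype.sum_prod_type]
    refine Finset.sum_congr rfl fun i _ => ?_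
    rw [Fintype.sum_bool]
    simp only [hg, cond_true, cond_false, smul_smul]
    module
  -- weights membership
  have hKmem : ∀ βo βe : Fin n → ℝ, (∀ i, 0 ≤ βo i) → (∀ i, 0 ≤ βe i) →
      (∑ i, (βo i + βe i)) = 1 → (fun p : Fin n × Bool => cond p.2 (βo p.1) (βe p.1)) ∈ K := by
    intro βo βe ho he hs
    constructor
    · rintro ⟨i, b⟩
      cases b
      · exact he i
      · exact ho i
    · rw [Fintype.sum_prod_type]
      simp only [Fintype.sum_bool, cond_true, cond_false]
      rw [← hs]
  -- coordinates of combinations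
  have hcoordfst : ∀ (c : Fin n → ℝ) (k : Fin m),
      (∑ i, c i • v i).1 k = ∑ i, c i * Γ k (x i) := by
    intro c k
    rw [Prod.fst_sum, Finset.sum_apply]
    rfl
  have hcoordsnd : ∀ (c : Fin n → ℝ), (∑ i, c i • v i).2 = ∑ i, c i * y i := by
    intro c
    rw [Prod.snd_sum]
    rfl
  -- S compact, convex, closed
  have hKconv : Convex ℝ K := by
    intro a ha b hb s t hs ht hst
    constructor
    · intro p
      have := ha.1 p; have := hb.1 p
      simp only [Pi.add_apply, Pi.smul_apply, smul_eq_mul]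
      positivity
    · simp only [Pi.add_apply, Pi.smul_apply, smul_eq_mul, Finset.sum_add_distrib,
        ← Finset.mul_sum, ha.2, hb.2, mul_one, hst]
  have hKcomp : IsCompact K := by
    apply Metric.isCompact_of_isClosed_isBounded
    · have h1 : IsClosed {w : Fin n × Bool → ℝ | ∀ p, 0 ≤ w p} := by
        have he : {w : Fin n × Bool → ℝ | ∀ p, 0 ≤ w p}
            = ⋂ p, {w : Fin n × Bool → ℝ | 0 ≤ w p} := by
          ext w; simp
        rw [he]
        exact isClosed_iInter fun p => isClosed_le continuous_const (continuous_apply p)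
      have h2 : IsClosed {w : Fin n × Bool → ℝ | ∑ p, w p = 1} := by
        refine isClosed_eq ?_ continuous_const
        exact continuous_finset_sum Finset.univ fun p _ => continuous_apply p
      exact h1.inter h2
    · rw [Metric.isBounded_iff_subset_closedBall (0 : Fin n × Bool → ℝ)]
      refine ⟨1, fun w hw => ?_⟩
      rw [Metric.mem_closedBall, dist_zero_right]
      refine (pi_norm_le_iff_of_nonneg zero_le_one).2 fun p => ?_
      rw [Real.norm_eq_abs, abs_of_nonneg (hw.1 p)]
      calc w p ≤ ∑ q, w q := Finset.single_le_sum (fun q _ => hw.1 q) (Finset.mem_univ p)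
        _ = 1 := hw.2
  have hSconv : Convex ℝ S := hKconv.linear_image A
  have hScomp : IsCompact S := hKcomp.image A.continuous_of_finiteDimensional
  have hSclosed : IsClosed S := hScomp.isClosed
  -- the feasible slice
  set T : Set ((Fin m → ℝ) × ℝ) := S ∩ {q | q.1 = 0} with hT
  have hTcomp : IsCompact T :=
    hScomp.inter_right (isClosed_eq (continuous_fst) continuous_const)
  have hTne : T.Nonempty := by
    obtain ⟨βo, βe, ho, he, hs, hc⟩ := hne
    refine ⟨∑ i, (βo i - βe i) • v i, ⟨_, hKmem βo βe ho he hs, hAval βo βe⟩, ?_⟩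
    show (∑ i, (βo i - βe i) • v i).1 = 0
    funext k
    rw [hcoordfst]; exact hc k
  obtain ⟨q0, hq0T, hq0max⟩ := hTcomp.exists_isMaxOn hTne (continuous_snd.continuousOn)
  set d : ℝ := q0.2 with hd
  -- membership in T gives dual feasibility data
  have hTdual : ∀ q ∈ T, ∃ βo βe : Fin n → ℝ, (∀ i, 0 ≤ βo i) ∧ (∀ i, 0 ≤ βe i) ∧
      (∑ i, (βo i + βe i)) = 1 ∧ (∀ k : Fin m, ∑ i, (βo i - βe i) * Γ k (x i) = 0) ∧
      q.2 = ∑ i, (βo i - βe i) * y i := by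
    rintro q ⟨⟨w, hwK, hwq⟩, hq1⟩
    refine ⟨fun i => w (i, true), fun i => w (i, false), fun i => hwK.1 _, fun i => hwK.1 _,
      ?_, ?_, ?_⟩
    · rw [← hwK.2, Fintype.sum_prod_type]
      simp [Fintype.sum_bool, add_comm]
    · intro k
      have hq' : q = ∑ i, (w (i, true) - w (i, false)) • v i := by
        rw [← hwq, ← hAval]
        congr 1
        funext p
        rcases p with ⟨i, b⟩
        cases b <;> rfl
      rw [← hcoordfst (fun i => w (i,true) - w (i,false)) k, ← hq']
      rw [hq1]; rfl
    · have hq' : q = ∑ i, (w (i, true) - w (i, false)) • v i := by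
        rw [← hwq, ← hAval]
        congr 1
        funext p
        rcases p with ⟨i, b⟩
        cases b <;> rfl
      rw [hq', hcoordsnd]
  set DS : Set ℝ := {v : ℝ | ∃ βo βe : Fin n → ℝ, (∀ i, 0 ≤ βo i) ∧ (∀ i, 0 ≤ βe i) ∧
        (∑ i, (βo i + βe i)) = 1 ∧
        (∀ k : Fin m, ∑ i, (βo i - βe i) * Γ k (x i) = 0) ∧
        v = ∑ i, (βo i - βe i) * y i} with hDS
  have hgreat : IsGreatest DS d := by
    constructor
    · obtain ⟨βo, βe, h1, h2, h3, h4, h5⟩ := hTdual q0 hq0T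
      exact ⟨βo, βe, h1, h2, h3, h4, h5⟩
    · rintro r ⟨βo, βe, ho, he, hs, hc, hr⟩
      have hmem : (∑ i, (βo i - βe i) • v i) ∈ T := by
        refine ⟨⟨_, hKmem βo βe ho he hs, hAval βo βe⟩, ?_⟩
        show (∑ i, (βo i - βe i) • v i).1 = 0
        funext k; rw [hcoordfst]; exact hc k
      rw [hr, ← hcoordsnd (fun i => βo i - βe i)]
      exact hq0max hmem
  -- weak duality
  have hweak : ∀ r ∈ DS, ∀ α : Fin m → ℝ, r ≤ unifErr hn x Γ y α := by
    rintro r ⟨βo, βe, ho, he, hs, hc, hr⟩ α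
    set M := unifErr hn x Γ y α with hM
    have hMabs : ∀ i, |y i - ∑ j, α j * Γ j (x i)| ≤ M :=
      fun i => unifErr_ge hn x Γ y α i
    have key : r = ∑ i, (βo i - βe i) * (y i - ∑ j, α j * Γ j (x i)) := by
      rw [hr]
      have : ∑ i, (βo i - βe i) * (y i - ∑ j, α j * Γ j (x i))
          = ∑ i, (βo i - βe i) * y i - ∑ j, α j * ∑ i, (βo i - βe i) * Γ j (x i) := by
        simp only [mul_sub, Finset.sum_sub_distrib]
        congr 1
        simp only [Finset.mul_sum]
        rw [Finset.sum_comm]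
        exact Finset.sum_congr rfl fun j _ => Finset.sum_congr rfl fun i _ => by ring
      rw [this]
      simp [hc]
    rw [key]
    calc ∑ i, (βo i - βe i) * (y i - ∑ j, α j * Γ j (x i))
        ≤ ∑ i, (βo i + βe i) * M := by
          refine Finset.sum_le_sum fun i _ => ?_
          have h1 : (βo i - βe i) * (y i - ∑ j, α j * Γ j (x i))
              ≤ |βo i - βe i| * |y i - ∑ j, α j * Γ j (x i)| := by
            calc _ ≤ |(βo i - βe i) * (y i - ∑ j, α j * Γ j (x i))| := le_abs_self _
              _ = _ := abs_mul _ _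
          refine h1.trans ?_
          have h2 : |βo i - βe i| ≤ βo i + βe i := by
            rw [abs_sub_le_iff]; constructor <;> nlinarith [ho i, he i]
          have h3 : (0:ℝ) ≤ |y i - ∑ j, α j * Γ j (x i)| := abs_nonneg _
          nlinarith [hMabs i, abs_nonneg (βo i - βe i)]
      _ = M := by rw [← Finset.sum_mul, hs, one_mul]
  have hbdd : BddBelow (Set.range fun α => unifErr hn x Γ y α) := by
    refine ⟨0, ?_⟩
    rintro _ ⟨α, rfl⟩
    exact unifErr_nonneg hn x Γ y α
  -- d ≤ iInf
  have hdle : d ≤ ⨅ α : Fin m → ℝ, unifErr hn x Γ y α :=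
    le_ciInf (hweak d hgreat.1)
  set p : ℝ := ⨅ α : Fin m → ℝ, unifErr hn x Γ y α with hp
  have hp0 : 0 ≤ p := le_ciInf fun α => unifErr_nonneg hn x Γ y α
  -- strong duality: p ≤ d
  have hpd : p ≤ d := by
    by_contra hlt
    push_neg at hlt
    -- (0, p) ∉ S
    have hnotin : ((0 : Fin m → ℝ), p) ∉ S := by
      intro hmem
      have hmemT : ((0 : Fin m → ℝ), p) ∈ T := ⟨hmem, rfl⟩
      have := hq0max hmemT
      exact absurd this (not_le.2 hlt)
    obtain ⟨f, u, hfS, hfu⟩ := geometric_hahn_banach_closed_point hSconv hSclosed hnotin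
    set b : ℝ := f ((0 : Fin m → ℝ), (1:ℝ)) with hb
    have hfp : f ((0 : Fin m → ℝ), p) = p * b := by
      have : ((0 : Fin m → ℝ), p) = p • ((0 : Fin m → ℝ), (1:ℝ)) := by
        simp
      rw [this, map_smul]; rfl
    -- each ±v i lies in S
    have hvS : ∀ (i : Fin n) (ε : Bool), g (i, ε) ∈ S := by
      intro i ε
      refine ⟨fun p => if p = (i, ε) then 1 else 0, ⟨?_, ?_⟩, ?_⟩
      · intro q; by_cases hq : q = (i, ε) <;> simp [hq]
      · simp
      · show ∑ q : Fin n × Bool, (if q = (i, ε) then (1:ℝ) else 0) • g q = g (i, ε)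
        rw [Finset.sum_eq_single (i, ε)]
        · simp
        · intro q _ hq; simp [hq]
        · simp
    have habs : ∀ i : Fin n, |f (v i)| < u := by
      intro i
      have h1 := hfS _ (hvS i true)
      have h2 := hfS _ (hvS i false)
      have e1 : g (i, true) = v i := by rw [hg]; simp
      have e2 : g (i, false) = -v i := by rw [hg]; simp
      rw [e1] at h1
      rw [e2, map_neg] at h2
      rw [abs_lt]; exact ⟨by linarith, h1⟩
    have hub : u < p * b := by rw [← hfp]; exact hfu
    have hu0 : 0 < u := lt_of_le_of_lt (abs_nonneg _) (habs ⟨0, hn⟩)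
    have hpb : 0 < p * b := lt_trans hu0 hub
    have hppos : 0 < p := by
      rcases lt_or_eq_of_le hp0 with h | h
      · exact h
      · exfalso; rw [← h] at hpb; simp at hpb
    have hbpos : 0 < b := by nlinarith
    -- decomposition of f
    set a : Fin m → ℝ := fun j => f ((Pi.single j (1:ℝ) : Fin m → ℝ), (0:ℝ)) with ha
    have hdecomp : ∀ z : (Fin m → ℝ) × ℝ, f z = (∑ j, z.1 j * a j) + z.2 * b := by
      intro z
      have hz1 : ∀ c : Fin m → ℝ, c = ∑ j, c j • (Pi.single j (1:ℝ) : Fin m → ℝ) := by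
        intro c
        funext k
        rw [Finset.sum_apply]
        simp [Pi.single_apply]
      have hz : z = (∑ j, z.1 j • (((Pi.single j (1:ℝ) : Fin m → ℝ), (0:ℝ)) : (Fin m → ℝ) × ℝ))
          + z.2 • (((0 : Fin m → ℝ), (1:ℝ)) : (Fin m → ℝ) × ℝ) := by
        rw [Prod.ext_iff]
        constructor
        · rw [Prod.fst_add, Prod.fst_sum]
          simp only [Prod.smul_fst, Prod.smul_mk, smul_zero, add_zero]
          exact hz1 z.1
        · rw [Prod.snd_add, Prod.snd_sum]
          simp
      conv_lhs => rw [hz]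
      rw [map_add, map_sum, map_smul]
      simp only [smul_eq_mul]
      congr 1
      refine Finset.sum_congr rfl fun j _ => ?_
      rw [map_smul, smul_eq_mul]
    set α : Fin m → ℝ := fun j => -(a j) / b with hα
    have hval : ∀ i, y i - ∑ j, α j * Γ j (x i) = f (v i) / b := by
      intro i
      rw [hdecomp (v i)]
      show y i - ∑ j, (-(a j)/b) * Γ j (x i)
          = ((∑ j, Γ j (x i) * a j) + y i * b) / b
      rw [eq_div_iff (ne_of_gt hbpos), sub_mul, Finset.sum_mul]
      have hsum : ∑ j, (-(a j)/b) * Γ j (x i) * b = ∑ j, -(Γ j (x i) * a j) := by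
        refine Finset.sum_congr rfl fun j _ => ?_
        rw [div_mul_eq_mul_div, div_mul_cancel₀ _ (ne_of_gt hbpos)]
        ring
      rw [hsum, Finset.sum_neg_distrib]
      ring
    have hlt2 : unifErr hn x Γ y α < p := by
      unfold unifErr
      apply (Finset.sup'_lt_iff ..).2
      intro i _
      rw [hval i, abs_div, abs_of_pos hbpos]
      rw [div_lt_iff₀ hbpos]
      calc |f (v i)| < u := habs i
        _ < p * b := hub
    exact absurd (ciInf_le hbdd α) (not_le.2 hlt2)
  have hpdeq : p = d := le_antisymm hpd hdle
  rw [hpdeq]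
  exact hgreat.csSup_eq.symm
end
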